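/- For a, b ∈ ℂ, the ℂ-vector space with basis {v_μ | μ ∈ ℤ} is a 𝓑(p,q)-module under the action L_{α,0} v_μ = q(a + μ + bα) v_{α+μ}, L_{α,i} v_μ = 0 for i > 0, and c v_μ = 0 (the module A_{a,b} of the intermediate series). -/

import Mathlib

/-- The Block type Lie algebra `𝓑(p,q)`: underlying space is
`(ℤ × ℕ →₀ ℂ) × ℂ`, where `L_{α,i} = (single (α,i) 1, 0)` and the central
element `c = (0, 1)`.  The bracket is
`[L_{α,i}, L_{β,j}] = ((i+q)(β+p) − (j+q)(α+p)) L_{α+β,i+j}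
  + δ_{α+β,0} δ_{i,0} δ_{j,0} (α³−α)/12 · c`, with `c` central. -/
noncomputable def BpqBracket (p q : ℂ) (X Y : (ℤ × ℕ →₀ ℂ) × ℂ) : (ℤ × ℕ →₀ ℂ) × ℂ :=
  (X.1.sum fun a x => Y.1.sum fun b y =>
      Finsupp.single (a.1 + b.1, a.2 + b.2)
        (x * y * (((a.2 : ℂ) + q) * ((b.1 : ℂ) + p) - ((b.2 : ℂ) + q) * ((a.1 : ℂ) + p))),
    X.1.sum fun a x => Y.1.sum fun b y =>
      x * y * (if a.1 + b.1 = 0 ∧ a.2 = 0 ∧ b.2 = 0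
        then (((a.1 : ℂ)) ^ 3 - (a.1 : ℂ)) / 12 else 0))

/-- The action of `𝓑(p,q)` on the module `A_{a,b}` of the intermediate series,
with basis `{v_μ | μ ∈ ℤ}` (modelled as `ℤ →₀ ℂ`, `v_μ = single μ 1`):
`L_{α,0} v_μ = q(a + μ + bα) v_{α+μ}`, `L_{α,i} v_μ = 0` for `i > 0`, `c v_μ = 0`. -/
noncomputable def actAab (q a b : ℂ) (X : (ℤ × ℕ →₀ ℂ) × ℂ) (v : ℤ →₀ ℂ) : ℤ →₀ ℂ :=
  X.1.sum fun l x => v.sum fun μ y =>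
    if l.2 = 0
      then Finsupp.single (l.1 + μ) (x * y * (q * (a + (μ : ℂ) + b * (l.1 : ℂ))))
      else 0


noncomputable def innerOp (q a b : ℂ) (l : ℤ × ℕ) : (ℤ →₀ ℂ) →ₗ[ℂ] (ℤ →₀ ℂ) :=
  Finsupp.lsum ℂ fun μ => LinearMap.toSpanSingleton ℂ _
    (if l.2 = 0 then Finsupp.single (l.1 + μ) (q * (a + (μ:ℂ) + b * (l.1:ℂ))) else 0)

noncomputable def Op (q a b : ℂ) : (ℤ × ℕ →₀ ℂ) →ₗ[ℂ] (ℤ →₀ ℂ) →ₗ[ℂ] (ℤ →₀ ℂ) :=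
  Finsupp.lsum ℂ fun l => LinearMap.toSpanSingleton ℂ _ (innerOp q a b l)

lemma actAab_eq (q a b : ℂ) (X : (ℤ × ℕ →₀ ℂ) × ℂ) (v : ℤ →₀ ℂ) :
    actAab q a b X v = Op q a b X.1 v := by
  rw [actAab, Op, Finsupp.lsum_apply (S := ℂ), LinearMap.finsupp_sum_apply]
  refine Finsupp.sum_congr fun l _ => ?_
  rw [LinearMap.toSpanSingleton_apply, LinearMap.smul_apply, innerOp,
    Finsupp.lsum_apply (S := ℂ), Finsupp.smul_sum]
  refine Finsupp.sum_congr fun μ _ => ?_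
  rw [LinearMap.toSpanSingleton_apply]
  by_cases h : l.2 = 0
  · rw [if_pos h, if_pos h, smul_smul, Finsupp.smul_single, smul_eq_mul, mul_assoc]
  · rw [if_neg h, if_neg h, smul_zero, smul_zero]

noncomputable def BrL (p q : ℂ) : (ℤ × ℕ →₀ ℂ) →ₗ[ℂ] (ℤ × ℕ →₀ ℂ) →ₗ[ℂ] (ℤ × ℕ →₀ ℂ) :=
  Finsupp.lsum ℂ fun l => LinearMap.toSpanSingleton ℂ _
    (Finsupp.lsum ℂ fun m => LinearMap.toSpanSingleton ℂ _
      (Finsupp.single (l.1 + m.1, l.2 + m.2)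
        (((l.2 : ℂ) + q) * ((m.1 : ℂ) + p) - ((m.2 : ℂ) + q) * ((l.1 : ℂ) + p))))

lemma bpq_fst (p q : ℂ) (X Y : (ℤ × ℕ →₀ ℂ) × ℂ) :
    (BpqBracket p q X Y).1 = BrL p q X.1 Y.1 := by
  rw [BpqBracket, BrL, Finsupp.lsum_apply (S := ℂ), LinearMap.finsupp_sum_apply]
  dsimp only
  refine Finsupp.sum_congr fun l _ => ?_
  rw [LinearMap.toSpanSingleton_apply, LinearMap.smul_apply, Finsupp.lsum_apply (S := ℂ),
    Finsupp.smul_sum]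
  refine Finsupp.sum_congr fun m _ => ?_
  rw [LinearMap.toSpanSingleton_apply, smul_smul, Finsupp.smul_single, smul_eq_mul,
    mul_assoc]

lemma innerOp_pos (q a b : ℂ) (l : ℤ × ℕ) (h : l.2 ≠ 0) : innerOp q a b l = 0 := by
  refine LinearMap.ext fun v => ?_
  rw [innerOp, Finsupp.lsum_apply (S := ℂ)]
  simp [if_neg h, Finsupp.sum]

lemma Op_single (q a b : ℂ) (l : ℤ × ℕ) (r : ℂ) (v : ℤ →₀ ℂ) :
    Op q a b (Finsupp.single l r) v = r • innerOp q a b l v := by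
  rw [Op, Finsupp.lsum_single, LinearMap.toSpanSingleton_apply, LinearMap.smul_apply]

lemma innerOp_single (q a b : ℂ) (l : ℤ × ℕ) (μ : ℤ) (t : ℂ) :
    innerOp q a b l (Finsupp.single μ t)
      = t • (if l.2 = 0 then Finsupp.single (l.1 + μ) (q * (a + (μ:ℂ) + b * (l.1:ℂ))) else 0) := by
  rw [innerOp, Finsupp.lsum_single, LinearMap.toSpanSingleton_apply]

lemma innerOp_zero_single (q a b : ℂ) (α μ : ℤ) (t : ℂ) :
    innerOp q a b (α, 0) (Finsupp.single μ t)
      = Finsupp.single (α + μ) (t * (q * (a + (μ:ℂ) + b * (α:ℂ)))) := by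
  rw [innerOp_single, if_pos rfl, Finsupp.smul_single, smul_eq_mul]

lemma key (p q a b : ℂ) (f g : ℤ × ℕ →₀ ℂ) (v : ℤ →₀ ℂ) :
    Op q a b (BrL p q f g) v
      = Op q a b f (Op q a b g v) - Op q a b g (Op q a b f v) := by
  induction f using Finsupp.induction_linear with
  | zero => simp only [map_zero, LinearMap.zero_apply, sub_self, sub_zero]
  | add f1 f2 h1 h2 =>
      simp only [map_add, LinearMap.add_apply, h1, h2]; abel
  | single l r =>
    induction g using Finsupp.induction_linear with
    | zero => simp only [map_zero, LinearMap.zero_apply, sub_self, sub_zero]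
    | add g1 g2 h1 h2 =>
        simp only [map_add, LinearMap.add_apply, h1, h2]; abel
    | single m s =>
      induction v using Finsupp.induction_linear with
      | zero => simp only [map_zero, LinearMap.zero_apply, sub_self, sub_zero]
      | add v1 v2 h1 h2 =>
          simp only [map_add, h1, h2]; abel
      | single μ t =>
        rw [BrL, Finsupp.lsum_single, LinearMap.toSpanSingleton_apply,
          LinearMap.smul_apply, Finsupp.lsum_single, LinearMap.toSpanSingleton_apply]
        simp only [map_smul, Op_single, innerOp_single]
        obtain ⟨α, i⟩ := l
        obtain ⟨β, j⟩ := m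
        simp only [LinearMap.smul_apply, Op_single, innerOp_single]
        rcases i with _ | i <;> rcases j with _ | j
        · simp only [Nat.add_zero, eq_self_iff_true, if_true, map_smul, Nat.cast_zero,
            innerOp_zero_single, Finsupp.smul_single, smul_eq_mul]
          ext n
          simp only [Finsupp.single_apply, Finsupp.coe_sub, Pi.sub_apply, Nat.cast_zero]
          split_ifs <;> try (exfalso; omega)
          all_goals push_cast; ring
        · have h2 : ((β, j + 1) : ℤ × ℕ).2 ≠ 0 := Nat.succ_ne_zero j
          simp [innerOp_pos _ _ _ _ h2, Nat.succ_ne_zero]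
        · have h2 : ((α, i + 1) : ℤ × ℕ).2 ≠ 0 := Nat.succ_ne_zero i
          simp [innerOp_pos _ _ _ _ h2, Nat.succ_ne_zero]
        · have h2 : ((α, i + 1) : ℤ × ℕ).2 ≠ 0 := Nat.succ_ne_zero i
          have h3 : ((β, j + 1) : ℤ × ℕ).2 ≠ 0 := Nat.succ_ne_zero j
          simp [innerOp_pos _ _ _ _ h2, innerOp_pos _ _ _ _ h3, Nat.succ_ne_zero]

/-- `A_{a,b}` is a `𝓑(p,q)`-module: the action is additive and satisfies
`[X,Y]v = X(Yv) − Y(Xv)`. -/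
theorem stmt7 (p q : ℂ) (hp : p ≠ 0) (hq : q ≠ 0) (a b : ℂ) :
    (∀ (X : (ℤ × ℕ →₀ ℂ) × ℂ) (v w : ℤ →₀ ℂ),
      actAab q a b X (v + w) = actAab q a b X v + actAab q a b X w) ∧
    (∀ (X Y : (ℤ × ℕ →₀ ℂ) × ℂ) (v : ℤ →₀ ℂ),
      actAab q a b (X + Y) v = actAab q a b X v + actAab q a b Y v) ∧
    (∀ (c : ℂ) (X : (ℤ × ℕ →₀ ℂ) × ℂ) (v : ℤ →₀ ℂ),
      actAab q a b (c • X) v = c • actAab q a b X v ∧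
      actAab q a b X (c • v) = c • actAab q a b X v) ∧
    (∀ (X Y : (ℤ × ℕ →₀ ℂ) × ℂ) (v : ℤ →₀ ℂ),
      actAab q a b (BpqBracket p q X Y) v
        = actAab q a b X (actAab q a b Y v) - actAab q a b Y (actAab q a b X v)) := by
  refine ⟨fun X v w => ?_, fun X Y v => ?_, fun c X v => ⟨?_, ?_⟩, fun X Y v => ?_⟩
  · simp only [actAab_eq, map_add]
  · simp only [actAab_eq, Prod.fst_add, map_add, LinearMap.add_apply]
  · simp only [actAab_eq, Prod.smul_fst, map_smul, LinearMap.smul_apply]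
  · simp only [actAab_eq, map_smul]
  · simp only [actAab_eq, bpq_fst, key]
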